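/- Let (X, 𝒜, ν) be a measure space, d a positive integer, R > 0, and C, B ≥ 0. Let F : ℝᵈ × X → ℝᵈ be such that x ↦ F(z, x) is measurable for each z, and suppose that (a) for all z₁, z₂ ∈ ℝᵈ with |z₁| ≤ R and |z₂| ≤ R one has ∫_X |F(z₁, x) − F(z₂, x)|² ν(dx) ≤ C|z₁ − z₂|², and (b) ∫_X |F(0, x)|² ν(dx) ≤ B. Then for all z₁, z₂ ∈ ℝᵈ with |z₁| ≤ R and R ≤ |z₂| ≤ 2R one has ∫_X |F(z₁, x) − ((2R − |z₂|)/R) · F(R·z₂/|z₂|, x)|² ν(dx) ≤ (6C + 4B/R²) · |z₁ − z₂|². -/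

import Mathlib

open MeasureTheory

lemma stmt_4_aux_norm (d : ℕ) (u v w : EuclideanSpace ℝ (Fin d)) (s : ℝ) (hs : 0 ≤ s) :
    ‖u + s•v + s•w‖^2 ≤ 3*‖u‖^2 + 3*s^2*‖v‖^2 + 3*s^2*‖w‖^2 := by
  have h := norm_add₃_le (a := u) (b := s•v) (c := s•w)
  rw [norm_smul, norm_smul, Real.norm_eq_abs, abs_of_nonneg hs] at h
  nlinarith [norm_nonneg u, norm_nonneg v, norm_nonneg w, sq_nonneg (‖u‖-s*‖v‖),
    sq_nonneg (‖u‖-s*‖w‖), sq_nonneg (s*‖v‖-s*‖w‖), norm_nonneg (u+s•v+s•w)]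

lemma stmt_4_aux_proj (d : ℕ) (z₁ z₂ : EuclideanSpace ℝ (Fin d)) (R : ℝ) (hR : 0 < R)
    (h1 : ‖z₁‖ ≤ R) (h2 : R ≤ ‖z₂‖) :
    ‖z₁ - (R/‖z₂‖) • z₂‖^2 ≤ ‖z₁ - z₂‖^2 := by
  have hn2 : (0:ℝ) < ‖z₂‖ := lt_of_lt_of_le hR h2
  have e1 := norm_sub_sq_real z₁ ((R/‖z₂‖) • z₂)
  have e2 := norm_sub_sq_real z₁ z₂
  rw [real_inner_smul_right, norm_smul, Real.norm_eq_abs,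
    abs_of_nonneg (by positivity : (0:ℝ) ≤ R/‖z₂‖)] at e1
  have hsm : R/‖z₂‖ * ‖z₂‖ = R := div_mul_cancel₀ _ (ne_of_gt hn2)
  have hs1 : R/‖z₂‖ ≤ 1 := (div_le_one hn2).2 h2
  have hp : inner ℝ z₁ z₂ ≤ R * ‖z₂‖ :=
    le_trans (real_inner_le_norm z₁ z₂) (by nlinarith [norm_nonneg z₁])
  nlinarith [mul_nonneg (sub_nonneg.2 hs1) (sub_nonneg.2 hp), hsm, sq_nonneg (‖z₂‖ - R)]

theorem stmt_4 {X : Type*} [MeasurableSpace X] (ν : Measure X)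
    (d : ℕ) (hd : 0 < d) (R C B : ℝ) (hR : 0 < R) (hC : 0 ≤ C) (hB : 0 ≤ B)
    (F : EuclideanSpace ℝ (Fin d) → X → EuclideanSpace ℝ (Fin d))
    (hmeas : ∀ z, Measurable fun x => F z x)
    (ha : ∀ z₁ z₂ : EuclideanSpace ℝ (Fin d), ‖z₁‖ ≤ R → ‖z₂‖ ≤ R →
      ∫⁻ x, (‖F z₁ x - F z₂ x‖₊ : ENNReal) ^ 2 ∂ν ≤ ENNReal.ofReal (C * ‖z₁ - z₂‖ ^ 2))
    (hb : ∫⁻ x, (‖F 0 x‖₊ : ENNReal) ^ 2 ∂ν ≤ ENNReal.ofReal B) :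
    ∀ z₁ z₂ : EuclideanSpace ℝ (Fin d), ‖z₁‖ ≤ R → R ≤ ‖z₂‖ → ‖z₂‖ ≤ 2 * R →
      ∫⁻ x, (‖F z₁ x - ((2 * R - ‖z₂‖) / R) • F ((R / ‖z₂‖) • z₂) x‖₊ : ENNReal) ^ 2 ∂ν
        ≤ ENNReal.ofReal ((6 * C + 4 * B / R ^ 2) * ‖z₁ - z₂‖ ^ 2) := by
  intro z₁ z₂ h1 h2 h3
  have hn2 : (0:ℝ) < ‖z₂‖ := lt_of_lt_of_le hR h2
  set w : EuclideanSpace ℝ (Fin d) := (R / ‖z₂‖) • z₂ with hw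
  have hwn : ‖w‖ = R := by
    rw [hw, norm_smul, Real.norm_eq_abs, abs_of_nonneg (by positivity : (0:ℝ) ≤ R/‖z₂‖),
      div_mul_cancel₀ _ (ne_of_gt hn2)]
  set s : ℝ := (‖z₂‖ - R) / R with hs_def
  have hs0 : 0 ≤ s := div_nonneg (by linarith) hR.le
  have hts : (2 * R - ‖z₂‖) / R = 1 - s := by rw [hs_def]; field_simp; ring
  -- vector identity
  have hvec : ∀ x, F z₁ x - ((2 * R - ‖z₂‖) / R) • F w x
      = (F z₁ x - F w x) + s • (F w x - F 0 x) + s • (F 0 x) := by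
    intro x
    rw [hts]
    module
  set K : ENNReal := ENNReal.ofReal (3 * s ^ 2) with hK
  have enn : ∀ y : EuclideanSpace ℝ (Fin d), (‖y‖₊ : ENNReal) ^ 2 = ENNReal.ofReal (‖y‖ ^ 2) := by
    intro y
    rw [← enorm_eq_nnnorm, ← ofReal_norm, ← ENNReal.ofReal_pow (norm_nonneg _)]
  -- pointwise bound
  have hpt : ∀ x, (‖F z₁ x - ((2 * R - ‖z₂‖) / R) • F w x‖₊ : ENNReal) ^ 2
      ≤ 3 * (‖F z₁ x - F w x‖₊ : ENNReal) ^ 2 + K * (‖F w x - F 0 x‖₊ : ENNReal) ^ 2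
        + K * (‖F 0 x‖₊ : ENNReal) ^ 2 := by
    intro x
    rw [hvec x, enn, enn, enn, enn, hK, show (3:ENNReal) = ENNReal.ofReal 3 by norm_num,
      ← ENNReal.ofReal_mul (by norm_num), ← ENNReal.ofReal_mul (by positivity),
      ← ENNReal.ofReal_mul (by positivity), ← ENNReal.ofReal_add (by positivity) (by positivity),
      ← ENNReal.ofReal_add (by positivity) (by positivity)]
    exact ENNReal.ofReal_le_ofReal
      (by nlinarith [stmt_4_aux_norm d (F z₁ x - F w x) (F w x - F 0 x) (F 0 x) s hs0])
  have m1 : Measurable fun x => (‖F z₁ x - F w x‖₊ : ENNReal) ^ 2 :=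
    (((hmeas z₁).sub (hmeas w)).nnnorm.coe_nnreal_ennreal).pow_const 2
  have m2 : Measurable fun x => (‖F w x - F 0 x‖₊ : ENNReal) ^ 2 :=
    (((hmeas w).sub (hmeas 0)).nnnorm.coe_nnreal_ennreal).pow_const 2
  have m3 : Measurable fun x => (‖F 0 x‖₊ : ENNReal) ^ 2 :=
    ((hmeas 0).nnnorm.coe_nnreal_ennreal).pow_const 2
  calc ∫⁻ x, (‖F z₁ x - ((2 * R - ‖z₂‖) / R) • F w x‖₊ : ENNReal) ^ 2 ∂ν
      ≤ ∫⁻ x, (3 * (‖F z₁ x - F w x‖₊ : ENNReal) ^ 2 + K * (‖F w x - F 0 x‖₊ : ENNReal) ^ 2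
          + K * (‖F 0 x‖₊ : ENNReal) ^ 2) ∂ν := lintegral_mono hpt
    _ = 3 * (∫⁻ x, (‖F z₁ x - F w x‖₊ : ENNReal) ^ 2 ∂ν)
        + K * (∫⁻ x, (‖F w x - F 0 x‖₊ : ENNReal) ^ 2 ∂ν)
        + K * (∫⁻ x, (‖F 0 x‖₊ : ENNReal) ^ 2 ∂ν) := by
        rw [lintegral_add_right _ (m3.const_mul K), lintegral_add_right _ (m2.const_mul K),
          lintegral_const_mul _ m1, lintegral_const_mul _ m2, lintegral_const_mul _ m3]
    _ ≤ 3 * ENNReal.ofReal (C * ‖z₁ - w‖ ^ 2) + K * ENNReal.ofReal (C * R ^ 2)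
        + K * ENNReal.ofReal B := by
        refine add_le_add (add_le_add (mul_le_mul_right ?_ 3) (mul_le_mul_right ?_ K))
          (mul_le_mul_right hb K)
        · exact ha z₁ w h1 (le_of_eq hwn)
        · have := ha w 0 (le_of_eq hwn) (by simp [hR.le])
          simpa [hwn] using this
    _ ≤ ENNReal.ofReal ((6 * C + 4 * B / R ^ 2) * ‖z₁ - z₂‖ ^ 2) := by
        rw [hK, show (3:ENNReal) = ENNReal.ofReal 3 by norm_num,
          ← ENNReal.ofReal_mul (by norm_num), ← ENNReal.ofReal_mul (by positivity),
          ← ENNReal.ofReal_mul (by positivity),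
          ← ENNReal.ofReal_add (by positivity) (by positivity),
          ← ENNReal.ofReal_add (by positivity) (by positivity)]
        apply ENNReal.ofReal_le_ofReal
        have hproj : ‖z₁ - w‖ ^ 2 ≤ ‖z₁ - z₂‖ ^ 2 := stmt_4_aux_proj d z₁ z₂ R hR h1 h2
        have hsR : s * R = ‖z₂‖ - R := div_mul_cancel₀ _ (ne_of_gt hR)
        have hD : ‖z₂‖ - R ≤ ‖z₁ - z₂‖ := by
          have := norm_sub_norm_le z₂ z₁
          rw [norm_sub_rev z₂ z₁] at this
          linarith
        have hs2 : s ^ 2 * R ^ 2 ≤ ‖z₁ - z₂‖ ^ 2 := by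
          nlinarith [norm_nonneg (z₁ - z₂), mul_nonneg hs0 hR.le]
        have hss : s ^ 2 ≤ ‖z₁ - z₂‖ ^ 2 / R ^ 2 := (le_div_iff₀ (by positivity)).2 hs2
        have hid : B * (‖z₁ - z₂‖ ^ 2 / R ^ 2) = B / R ^ 2 * ‖z₁ - z₂‖ ^ 2 := by ring
        rw [show (6 * C + 4 * B / R ^ 2) * ‖z₁ - z₂‖ ^ 2
            = 6 * (C * ‖z₁ - z₂‖ ^ 2) + 4 * (B * (‖z₁ - z₂‖ ^ 2 / R ^ 2)) from by ring]
        nlinarith [mul_le_mul_of_nonneg_left hss hB, mul_le_mul_of_nonneg_left hs2 hC,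
          mul_le_mul_of_nonneg_left hproj hC, sq_nonneg ‖z₁ - z₂‖]
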